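/- Define S on the Foissy Hopf algebra H_F as the algebra antihomomorphism (S(F_1F_2) = S(F_2)S(F_1) for ordered forests) determined on planar rooted trees by S(T) = −Σ_{all cuts c of T} (−1)^{|c|} \overline{P^c(T)}·R^c(T), where \overline{F} denotes the reverse of the ordered forest F and the empty cut contributes −T. Then S satisfies the antipode identity: for every planar rooted tree T, S(T) + T + Σ_{nonempty admissible cuts c of T} S(P^c(T))·R^c(T) = 0, i.e., μ∘(S⊗id)∘Δ(T) = 0. -/

import Mathlib

/-! ### Planar rooted trees -/

/-- A planar rooted tree: a root with an ordered list of branches.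
`PTree.node [T₁,…,T_k]` is `B₊(T₁⋯T_k)`; `PTree.node []` is the one-vertex tree `•`. -/
inductive PTree : Type where
  | node : List PTree → PTree

instance : Inhabited PTree := ⟨.node []⟩

noncomputable instance : DecidableEq PTree := Classical.decEq _

/-! ### Cuts -/

/-- A decoration of (the edges of) a tree by Booleans: `true` means the edge
belongs to the cut. `Cut.node [(b₁,c₁),…,(b_k,c_k)]` matches a tree
`PTree.node [t₁,…,t_k]`, with `bᵢ` decorating the edge from the root to `tᵢ`
and `cᵢ` a cut of `tᵢ`. -/
inductive Cut : Type where
  | node : List (Bool × Cut) → Cut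

namespace Cut

mutual
/-- The number of edges in a cut. -/
def size : Cut → ℕ
  | .node l => sizeList l
/-- The number of edges in a list of decorated edges. -/
def sizeList : List (Bool × Cut) → ℕ
  | [] => 0
  | (b, c) :: cs => (if b then 1 else 0) + size c + sizeList cs
end

mutual
/-- The cut containing no edges. -/
def isEmpty : Cut → Bool
  | .node l => isEmptyList l
/-- Whether a list of decorated edges contains no cut edge. -/
def isEmptyList : List (Bool × Cut) → Bool
  | [] => true
  | (b, c) :: cs => !b && isEmpty c && isEmptyList cs
end

mutual
/-- A cut is admissible if every path from the root to a leaf meets it at most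
once, i.e. below a cut edge there is no further cut edge. -/
def admissible : Cut → Bool
  | .node l => admissibleList l
/-- Admissibility for a list of decorated edges. -/
def admissibleList : List (Bool × Cut) → Bool
  | [] => true
  | (b, c) :: cs => (if b then isEmpty c else admissible c) && admissibleList cs
end

end Cut

namespace PTree

mutual
/-- All cuts (edge subsets) of a planar rooted tree. -/
def cutsOf : PTree → List Cut
  | .node l => (cutsOfList l).map Cut.node
/-- All decorations of a forest. -/
def cutsOfList : List PTree → List (List (Bool × Cut))
  | [] => [[]]
  | t :: ts =>
      (cutsOf t).flatMap (fun c =>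
        (cutsOfList ts).flatMap (fun cs => [(true, c) :: cs, (false, c) :: cs]))
end

mutual
/-- `cutPieces t c = (R^c(t), P^c(t))`: the root component of `t` after removing
the edges of `c`, together with the ordered forest of the remaining components
(in planar depth-first order). -/
def cutPieces : PTree → Cut → PTree × List PTree
  | .node l, .node cs =>
      ((PTree.node (cutPiecesList l cs).1 : PTree), (cutPiecesList l cs).2)
/-- `cutPieces` for forests. -/
def cutPiecesList : List PTree → List (Bool × Cut) → List PTree × List PTree
  | [], _ => ([], [])
  | _ :: _, [] => ([], [])
  | t :: ts, (b, c) :: cs =>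
      let p := cutPieces t c
      let q := cutPiecesList ts cs
      if b then (q.1, (p.1 :: p.2) ++ q.2) else (p.1 :: q.1, p.2 ++ q.2)
end

/-- `R^c(T)`, the component containing the root. -/
def Rcut (t : PTree) (c : Cut) : PTree := (cutPieces t c).1

/-- `P^c(T)`, the ordered forest of components not containing the root. -/
def Pcut (t : PTree) (c : Cut) : List PTree := (cutPieces t c).2

end PTree

/-! ### The Foissy Hopf algebra -/

/-- The Foissy Hopf algebra over `k`: the tensor algebra on the span of planar
rooted trees, with monomial basis the ordered forests (words) of planar trees. -/
abbrev HF (k : Type*) [CommSemiring k] := MonoidAlgebra k (FreeMonoid PTree)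

/-- The model for `H_F ⊗ H_F`. -/
abbrev HF2 (k : Type*) [CommSemiring k] :=
  MonoidAlgebra k (FreeMonoid PTree × FreeMonoid PTree)

/-- `B₊` on `H_F`: sends an ordered forest to the tree obtained by attaching a
new root, extended linearly. -/
noncomputable def BplusF (k : Type*) [CommSemiring k] : HF k → HF k :=
  MonoidAlgebra.mapDomain (fun F => FreeMonoid.of (PTree.node (FreeMonoid.toList F)))

/-- The tensor product map `H_F × H_F → H_F ⊗ H_F` in the pair model. -/
noncomputable def tensHF (k : Type*) [CommSemiring k] (f g : HF k) : HF2 k :=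
  f.coeff.sum (fun a x => g.coeff.sum (fun b y => MonoidAlgebra.single (a, b) (x * y)))

/-- The map `S` on planar rooted trees:
`S(T) = −Σ_{all cuts c of T} (−1)^{|c|} overline{P^c(T)}·R^c(T)`, where
`overline{F}` is the reverse of the ordered forest `F` (the sum being over all
cuts; the empty cut contributes `−T`). -/
noncomputable def fS (k : Type*) [CommRing k] (T : PTree) : HF k :=
  - (((PTree.cutsOf T).map (fun c =>
      ((-1 : k) ^ (Cut.size c)) •
        MonoidAlgebra.single
          (FreeMonoid.ofList ((PTree.Pcut T c).reverse ++ [PTree.Rcut T c])) (1 : k))).sum)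

/-- Antimultiplicative extension of `S` to ordered forests:
`S(F₁F₂) = S(F₂)S(F₁)`. -/
noncomputable def fSForest (k : Type*) [CommRing k] (F : List PTree) : HF k :=
  (F.reverse.map (fS k)).prod
/-! ### Auxiliary machinery for the antipode identity -/

namespace FSAux

open MonoidAlgebra MulOpposite

/-! #### List helpers -/

theorem list_sum_flatMap {α β M : Type*} [AddCommMonoid M] (l : List α) (g : α → List β)
    (f : β → M) :
    ((l.flatMap g).map f).sum = (l.map (fun a => ((g a).map f).sum)).sum := by
  induction l with
  | nil => simp
  | cons a l ih => simp [List.flatMap_cons, ih]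

theorem list_sum_filter {α M : Type*} [AddCommMonoid M] (p : α → Bool) (l : List α)
    (f : α → M) :
    ((l.filter p).map f).sum = (l.map (fun a => if p a then f a else 0)).sum := by
  induction l with
  | nil => rfl
  | cons a l ih => by_cases h : p a <;> simp [List.filter_cons, h, ih]

theorem list_sum_map_add {α M : Type*} [AddCommMonoid M] (l : List α) (f g : α → M) :
    (l.map (fun a => f a + g a)).sum = (l.map f).sum + (l.map g).sum := by
  induction l with
  | nil => simp
  | cons a l ih => simp [ih]; abel

theorem list_sum_congr {α M : Type*} [AddCommMonoid M] {l : List α} {f g : α → M}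
    (h : ∀ a, f a = g a) : (l.map f).sum = (l.map g).sum := by
  simp only [funext h]

theorem list_sum_zero {α M : Type*} [AddCommMonoid M] (l : List α) :
    (l.map (fun _ => (0 : M))).sum = 0 := by simp

/-! #### The empty cut -/

mutual
/-- The empty cut of a tree. -/
def eC : PTree → Cut
  | .node l => .node (eCL l)
/-- The empty cut of a forest. -/
def eCL : List PTree → List (Bool × Cut)
  | [] => []
  | t :: ts => (false, eC t) :: eCL ts
end

mutual
theorem cutPieces_eC : ∀ t : PTree, PTree.cutPieces t (eC t) = (t, [])
  | .node l => by rw [eC, PTree.cutPieces, cutPiecesList_eCL l]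
theorem cutPiecesList_eCL : ∀ l : List PTree, PTree.cutPiecesList l (eCL l) = (l, [])
  | [] => by rw [eCL, PTree.cutPiecesList]
  | t :: ts => by
      rw [eCL, PTree.cutPiecesList, cutPieces_eC t, cutPiecesList_eCL ts]
      simp
end

mutual
theorem adm_of_isEmpty : ∀ c : Cut, Cut.isEmpty c = true → Cut.admissible c = true
  | .node l, h => by
      rw [Cut.isEmpty] at h
      rw [Cut.admissible]
      exact admL_of_isEmptyL l h
theorem admL_of_isEmptyL : ∀ l : List (Bool × Cut),
    Cut.isEmptyList l = true → Cut.admissibleList l = true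
  | [], _ => rfl
  | (b, c) :: cs, h => by
      rw [Cut.isEmptyList] at h
      rw [Cut.admissibleList]
      simp only [Bool.and_eq_true, Bool.not_eq_true'] at h
      obtain ⟨⟨hb, hc⟩, hcs⟩ := h
      subst hb
      simp [adm_of_isEmpty c hc, admL_of_isEmptyL cs hcs]
end

mutual
theorem sum_if_isEmpty {M : Type*} [AddCommMonoid M] :
    ∀ (t : PTree) (F : Cut → M),
      ((PTree.cutsOf t).map (fun c => if Cut.isEmpty c then F c else 0)).sum = F (eC t)
  | .node l, F => by
      rw [PTree.cutsOf, List.map_map]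
      have h1 : ((fun c => if Cut.isEmpty c then F c else 0) ∘ Cut.node)
          = fun cs => if Cut.isEmptyList cs then F (Cut.node cs) else 0 := by
        funext cs; rw [Function.comp_apply, Cut.isEmpty]
      rw [h1, sumL_if_isEmpty l (fun cs => F (Cut.node cs))]
      rw [eC]
theorem sumL_if_isEmpty {M : Type*} [AddCommMonoid M] :
    ∀ (l : List PTree) (F : List (Bool × Cut) → M),
      ((PTree.cutsOfList l).map
        (fun cs => if Cut.isEmptyList cs then F cs else 0)).sum = F (eCL l)
  | [], F => by rw [PTree.cutsOfList]; simp [Cut.isEmptyList, eCL]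
  | t :: ts, F => by
      rw [PTree.cutsOfList, list_sum_flatMap]
      have h1 : ∀ c : Cut,
          (((PTree.cutsOfList ts).flatMap
              (fun cs => [(true, c) :: cs, (false, c) :: cs])).map
            (fun cs => if Cut.isEmptyList cs then F cs else 0)).sum
          = if Cut.isEmpty c then
              ((PTree.cutsOfList ts).map
                (fun cs => if Cut.isEmptyList cs then F ((false, c) :: cs) else 0)).sum
            else 0 := by
        intro c
        rw [list_sum_flatMap]
        have h2 : ∀ cs : List (Bool × Cut),
            (([(true, c) :: cs, (false, c) :: cs]).map
              (fun cs => if Cut.isEmptyList cs then F cs else 0)).sum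
            = if Cut.isEmpty c then
                (if Cut.isEmptyList cs then F ((false, c) :: cs) else 0) else 0 := by
          intro cs
          have e1 : Cut.isEmptyList ((true, c) :: cs) = false := by
            rw [Cut.isEmptyList]; simp
          have e2 : Cut.isEmptyList ((false, c) :: cs)
              = (Cut.isEmpty c && Cut.isEmptyList cs) := by
            rw [Cut.isEmptyList]; simp
          rw [List.map_cons, List.map_cons, List.map_nil, e1, e2]
          cases hc : Cut.isEmpty c <;> cases hcs : Cut.isEmptyList cs <;> simp
        rw [list_sum_congr h2]
        cases hc : Cut.isEmpty c
        · simp [list_sum_zero]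
        · simp
      rw [list_sum_congr h1, sum_if_isEmpty t, sumL_if_isEmpty ts, eCL]
end

end FSAux
namespace FSAux

open MonoidAlgebra MulOpposite

variable (k : Type*) [CommRing k]

/-- The model of `H_F ⊗ H_F` with the first factor carrying the opposite
multiplication (so that reversed concatenation becomes multiplication). -/
abbrev A := MonoidAlgebra k ((FreeMonoid PTree)ᵐᵒᵖ × FreeMonoid PTree)

/-- Anti-embedding of `H_F` into the first tensor factor. -/
noncomputable def iota (f : HF k) : A k :=
  MonoidAlgebra.mapDomain (fun p => (op p, (1 : FreeMonoid PTree))) f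

variable {k}

theorem iota_single (p : FreeMonoid PTree) (a : k) :
    iota k (MonoidAlgebra.single p a)
      = MonoidAlgebra.single ((op p, (1 : FreeMonoid PTree))) a :=
  MonoidAlgebra.mapDomain_single

theorem iota_zero : iota k 0 = 0 := MonoidAlgebra.mapDomain_zero _

theorem iota_add (f g : HF k) : iota k (f + g) = iota k f + iota k g :=
  MonoidAlgebra.mapDomain_add _ _ _

theorem iota_neg (f : HF k) : iota k (-f) = -iota k f := by
  have h := iota_add f (-f)
  simp only [add_neg_cancel, iota_zero] at h
  exact eq_neg_of_add_eq_zero_right h.symm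

theorem iota_single_mul (g : HF k) (p : FreeMonoid PTree) (a : k) :
    iota k (MonoidAlgebra.single p a * g)
      = iota k g * MonoidAlgebra.single ((op p, (1 : FreeMonoid PTree))) a := by
  induction g using MonoidAlgebra.induction with
  | zero => simp [iota_zero]
  | single_add q b g _ _ ih =>
      rw [mul_add, iota_add, ih, iota_add, add_mul]
      congr 1
      rw [MonoidAlgebra.single_mul_single, iota_single, iota_single,
        MonoidAlgebra.single_mul_single]
      simp [mul_comm]

theorem iota_mul (f g : HF k) : iota k (f * g) = iota k g * iota k f := by
  induction f using MonoidAlgebra.induction with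
  | zero => simp [iota_zero]
  | single_add p a f _ _ ih =>
      rw [add_mul, iota_add, iota_add, mul_add, ih, iota_single_mul, iota_single]

theorem iota_one : iota k 1 = 1 := by
  rw [MonoidAlgebra.one_def, iota_single]; rfl

theorem iota_list_sum {α : Type*} (l : List α) (f : α → HF k) :
    iota k ((l.map f).sum) = (l.map (fun a => iota k (f a))).sum := by
  induction l with
  | nil => simp [iota_zero]
  | cons a l ih => simp [iota_add, ih]

/-- `iota f` commutes with `single (1, r)`. -/
theorem iota_comm_single (f : HF k) (r : FreeMonoid PTree) (a : k) :
    iota k f * MonoidAlgebra.single ((1 : (FreeMonoid PTree)ᵐᵒᵖ), r) a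
      = MonoidAlgebra.single ((1 : (FreeMonoid PTree)ᵐᵒᵖ), r) a * iota k f := by
  induction f using MonoidAlgebra.induction with
  | zero => simp [iota_zero]
  | single_add p b f _ _ ih =>
      rw [iota_add, add_mul, mul_add, ih, iota_single,
        MonoidAlgebra.single_mul_single, MonoidAlgebra.single_mul_single]
      simp [mul_comm]

/-! #### `fSForest` multiplicativity -/

theorem fSForest_nil : fSForest k [] = 1 := rfl

theorem fSForest_cons (t : PTree) (l : List PTree) :
    fSForest k (t :: l) = fSForest k l * fS k t := by
  simp [fSForest, List.reverse_cons]

theorem fSForest_append (l₁ l₂ : List PTree) :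
    fSForest k (l₁ ++ l₂) = fSForest k l₂ * fSForest k l₁ := by
  simp [fSForest, List.reverse_append]

end FSAux
namespace FSAux

open MonoidAlgebra MulOpposite

variable (k : Type*) [CommRing k]

/-! #### Summand abbreviations -/

noncomputable def lterm (l : List PTree) (cs : List (Bool × Cut)) : A k :=
  iota k (fSForest k (PTree.cutPiecesList l cs).2) *
    MonoidAlgebra.single
      ((1 : (FreeMonoid PTree)ᵐᵒᵖ), FreeMonoid.ofList (PTree.cutPiecesList l cs).1) (1 : k)

noncomputable def rterm (l : List PTree) (cs : List (Bool × Cut)) : A k :=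
  MonoidAlgebra.single
    ((op (FreeMonoid.ofList (PTree.cutPiecesList l cs).2.reverse),
      FreeMonoid.ofList (PTree.cutPiecesList l cs).1))
    ((-1 : k) ^ (Cut.sizeList cs))

noncomputable def tterm (t : PTree) (c : Cut) : A k :=
  iota k (fSForest k (PTree.Pcut t c)) *
    MonoidAlgebra.single
      ((1 : (FreeMonoid PTree)ᵐᵒᵖ), FreeMonoid.of (PTree.Rcut t c)) (1 : k)

noncomputable def ttR (t : PTree) (c : Cut) : A k :=
  MonoidAlgebra.single
    ((op (FreeMonoid.ofList (PTree.Pcut t c).reverse), FreeMonoid.of (PTree.Rcut t c)))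
    ((-1 : k) ^ (Cut.size c))

noncomputable def ttN (t : PTree) (c : Cut) : A k :=
  MonoidAlgebra.single
    ((op (FreeMonoid.ofList ((PTree.Pcut t c).reverse ++ [PTree.Rcut t c])),
      (1 : FreeMonoid PTree)))
    (-((-1 : k) ^ (Cut.size c)))

noncomputable def LHT (t : PTree) : A k :=
  (((PTree.cutsOf t).filter Cut.admissible).map (tterm k t)).sum

noncomputable def RHT (t : PTree) : A k :=
  ((PTree.cutsOf t).map (ttR k t)).sum

noncomputable def LHF (l : List PTree) : A k :=
  (((PTree.cutsOfList l).filter Cut.admissibleList).map (lterm k l)).sum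

noncomputable def RHF (l : List PTree) : A k :=
  ((PTree.cutsOfList l).map (rterm k l)).sum

variable {k}

theorem list_sum_map_neg {α M : Type*} [AddCommGroup M] (l : List α) (f : α → M) :
    (l.map (fun a => -f a)).sum = -(l.map f).sum := by
  induction l with
  | nil => simp
  | cons a l ih => simp [ih]; abel

theorem iota_fS (t : PTree) :
    iota k (fS k t) = ((PTree.cutsOf t).map (ttN k t)).sum := by
  rw [fS, iota_neg, iota_list_sum, ← list_sum_map_neg]
  refine list_sum_congr (fun c => ?_)
  rw [MonoidAlgebra.smul_single', mul_one, iota_single, ttN,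
    ← MonoidAlgebra.single_neg]

/-! #### Reduction of `cutPiecesList` on a cons -/

theorem cutPiecesList_cons_true (t : PTree) (ts : List PTree) (c : Cut)
    (cs : List (Bool × Cut)) :
    PTree.cutPiecesList (t :: ts) ((true, c) :: cs)
      = ((PTree.cutPiecesList ts cs).1,
          ((PTree.cutPieces t c).1 :: (PTree.cutPieces t c).2)
            ++ (PTree.cutPiecesList ts cs).2) := by
  rw [PTree.cutPiecesList]; simp

theorem cutPiecesList_cons_false (t : PTree) (ts : List PTree) (c : Cut)
    (cs : List (Bool × Cut)) :
    PTree.cutPiecesList (t :: ts) ((false, c) :: cs)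
      = ((PTree.cutPieces t c).1 :: (PTree.cutPiecesList ts cs).1,
          (PTree.cutPieces t c).2 ++ (PTree.cutPiecesList ts cs).2) := by
  rw [PTree.cutPiecesList]; simp

theorem sizeList_cons (b : Bool) (c : Cut) (cs : List (Bool × Cut)) :
    Cut.sizeList ((b, c) :: cs) = (if b then 1 else 0) + Cut.size c + Cut.sizeList cs := by
  rw [Cut.sizeList]

theorem admL_cons (b : Bool) (c : Cut) (cs : List (Bool × Cut)) :
    Cut.admissibleList ((b, c) :: cs)
      = ((if b then Cut.isEmpty c else Cut.admissible c) && Cut.admissibleList cs) := by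
  rw [Cut.admissibleList]

/-! #### The four product identities for summands -/

theorem lterm_false (t : PTree) (ts : List PTree) (c : Cut) (cs : List (Bool × Cut)) :
    lterm k (t :: ts) ((false, c) :: cs) = tterm k t c * lterm k ts cs := by
  rw [lterm, tterm, lterm, cutPiecesList_cons_false]
  show iota k (fSForest k ((PTree.cutPieces t c).2 ++ (PTree.cutPiecesList ts cs).2)) *
      MonoidAlgebra.single
        ((1 : (FreeMonoid PTree)ᵐᵒᵖ),
          FreeMonoid.ofList ((PTree.cutPieces t c).1 :: (PTree.cutPiecesList ts cs).1))
        (1 : k) = _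
  rw [fSForest_append, iota_mul]
  have h1 : FreeMonoid.ofList ((PTree.cutPieces t c).1 :: (PTree.cutPiecesList ts cs).1)
      = FreeMonoid.of (PTree.cutPieces t c).1
          * FreeMonoid.ofList (PTree.cutPiecesList ts cs).1 := by
    rfl
  rw [h1]
  have h2 : MonoidAlgebra.single
        ((1 : (FreeMonoid PTree)ᵐᵒᵖ),
          FreeMonoid.of (PTree.cutPieces t c).1
            * FreeMonoid.ofList (PTree.cutPiecesList ts cs).1) (1 : k)
      = MonoidAlgebra.single
          ((1 : (FreeMonoid PTree)ᵐᵒᵖ), FreeMonoid.of (PTree.cutPieces t c).1) (1 : k)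
        * MonoidAlgebra.single
            ((1 : (FreeMonoid PTree)ᵐᵒᵖ),
              FreeMonoid.ofList (PTree.cutPiecesList ts cs).1) (1 : k) := by
    rw [MonoidAlgebra.single_mul_single]
    simp
  rw [h2, PTree.Pcut, PTree.Rcut]
  have hc := iota_comm_single (k := k) (fSForest k (PTree.cutPiecesList ts cs).2)
    (FreeMonoid.of (PTree.cutPieces t c).1) 1
  rw [mul_assoc, ← mul_assoc (iota k (fSForest k (PTree.cutPiecesList ts cs).2)), hc]
  simp only [mul_assoc]

theorem lterm_true_eC (t : PTree) (ts : List PTree) (cs : List (Bool × Cut)) :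
    lterm k (t :: ts) ((true, eC t) :: cs) = iota k (fS k t) * lterm k ts cs := by
  rw [lterm, lterm, cutPiecesList_cons_true, cutPieces_eC]
  simp only [List.cons_append, List.nil_append]
  rw [fSForest_cons, iota_mul, mul_assoc]

theorem rterm_true (t : PTree) (ts : List PTree) (c : Cut) (cs : List (Bool × Cut)) :
    rterm k (t :: ts) ((true, c) :: cs) = ttN k t c * rterm k ts cs := by
  rw [rterm, rterm, ttN, cutPiecesList_cons_true, sizeList_cons, PTree.Pcut, PTree.Rcut,
    MonoidAlgebra.single_mul_single, Prod.mk_mul_mk, one_mul, ← op_mul,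
    ← FreeMonoid.ofList_append]
  congr 1
  · rw [List.reverse_append, List.reverse_cons]
  · simp [pow_add]

theorem rterm_false (t : PTree) (ts : List PTree) (c : Cut) (cs : List (Bool × Cut)) :
    rterm k (t :: ts) ((false, c) :: cs) = ttR k t c * rterm k ts cs := by
  rw [rterm, rterm, ttR, cutPiecesList_cons_false, sizeList_cons, PTree.Pcut, PTree.Rcut,
    MonoidAlgebra.single_mul_single, Prod.mk_mul_mk, ← op_mul,
    ← FreeMonoid.ofList_append]
  congr 1
  · congr 1
    rw [List.reverse_append]
  · simp [pow_add]

end FSAux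
namespace FSAux

open MonoidAlgebra MulOpposite

variable {k : Type*} [CommRing k]

/-- Collapsing the second tensor factor with `B₊`. -/
def beta : (FreeMonoid PTree)ᵐᵒᵖ × FreeMonoid PTree →
    (FreeMonoid PTree)ᵐᵒᵖ × FreeMonoid PTree :=
  fun x => (x.1, FreeMonoid.of (PTree.node (FreeMonoid.toList x.2)))

theorem mapDomain_listsum {α γ : Type*}
    (g : (FreeMonoid PTree)ᵐᵒᵖ × FreeMonoid PTree → γ)
    (l : List α) (f : α → A k) :
    MonoidAlgebra.mapDomain g ((l.map f).sum)
      = (l.map (fun a => MonoidAlgebra.mapDomain g (f a))).sum := by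
  induction l with
  | nil => simp
  | cons a l ih =>
      rw [List.map_cons, List.map_cons, List.sum_cons, List.sum_cons,
        MonoidAlgebra.mapDomain_add, ih]

theorem mapDomain_beta_term (f : HF k) (r : FreeMonoid PTree) :
    MonoidAlgebra.mapDomain beta
        (iota k f *
          MonoidAlgebra.single ((1 : (FreeMonoid PTree)ᵐᵒᵖ), r) (1 : k))
      = iota k f *
          MonoidAlgebra.single
            ((1 : (FreeMonoid PTree)ᵐᵒᵖ),
              FreeMonoid.of (PTree.node (FreeMonoid.toList r))) (1 : k) := by
  induction f using MonoidAlgebra.induction with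
  | zero => simp [iota_zero]
  | single_add p b f _ _ ih =>
      rw [iota_add, add_mul, MonoidAlgebra.mapDomain_add, ih, add_mul]
      congr 1
      rw [iota_single, MonoidAlgebra.single_mul_single,
        MonoidAlgebra.single_mul_single, MonoidAlgebra.mapDomain_single]
      simp [beta]

-- The key identity for trees and forests, by mutual induction.
mutual
theorem TG : ∀ t : PTree, LHT k t = RHT k t
  | .node l => by
      have hFG := FG l
      have hL : LHT k (PTree.node l) = MonoidAlgebra.mapDomain beta (LHF k l) := by
        rw [LHT, LHF, PTree.cutsOf, List.filter_map, List.map_map, mapDomain_listsum]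
        have hadm : (Cut.admissible ∘ Cut.node) = Cut.admissibleList := by
          funext cs; rw [Function.comp_apply, Cut.admissible]
        rw [hadm]
        refine list_sum_congr (fun cs => ?_)
        rw [Function.comp_apply, tterm, lterm, mapDomain_beta_term, PTree.Pcut,
          PTree.Rcut, PTree.cutPieces]
        rfl
      have hR : RHT k (PTree.node l) = MonoidAlgebra.mapDomain beta (RHF k l) := by
        rw [RHT, RHF, PTree.cutsOf, List.map_map, mapDomain_listsum]
        refine list_sum_congr (fun cs => ?_)
        rw [Function.comp_apply, ttR, rterm, MonoidAlgebra.mapDomain_single, PTree.Pcut,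
          PTree.Rcut, PTree.cutPieces, Cut.size]
        rfl
      rw [hL, hR, hFG]
  termination_by t => sizeOf t
theorem FG : ∀ l : List PTree, LHF k l = RHF k l
  | [] => by
      rw [LHF, RHF, PTree.cutsOfList]
      have h1 : PTree.cutPiecesList ([] : List PTree) [] = ([], []) := by
        rw [PTree.cutPiecesList]
      have h2 : Cut.admissibleList [] = true := rfl
      have h3 : Cut.sizeList [] = 0 := rfl
      simp [h2, h3, lterm, rterm, h1, fSForest_nil, iota_one]
  | t :: ts => by
      have hTG := TG t
      have hFG := FG ts
      have hL : LHF k (t :: ts) = iota k (fS k t) * LHF k ts + LHT k t * LHF k ts := by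
        rw [LHF, PTree.cutsOfList, list_sum_filter, list_sum_flatMap]
        have inner : ∀ c : Cut,
            (((PTree.cutsOfList ts).flatMap
                (fun cs => [(true, c) :: cs, (false, c) :: cs])).map
              (fun xs => if Cut.admissibleList xs then lterm k (t :: ts) xs else 0)).sum
            = (if Cut.isEmpty c then
                  ((PTree.cutsOfList ts).map (fun cs =>
                    if Cut.admissibleList cs then lterm k (t :: ts) ((true, c) :: cs)
                    else 0)).sum
                else 0)
              + (if Cut.admissible c then tterm k t c else 0) * LHF k ts := by
          intro c
          rw [list_sum_flatMap]
          have perCS : ∀ cs : List (Bool × Cut),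
              (([(true, c) :: cs, (false, c) :: cs]).map
                (fun xs => if Cut.admissibleList xs then lterm k (t :: ts) xs else 0)).sum
              = (if Cut.isEmpty c then
                    (if Cut.admissibleList cs then lterm k (t :: ts) ((true, c) :: cs)
                     else 0)
                  else 0)
                + (if Cut.admissible c then tterm k t c else 0)
                    * (if Cut.admissibleList cs then lterm k ts cs else 0) := by
            intro cs
            rw [List.map_cons, List.map_cons, List.map_nil, List.sum_cons,
              List.sum_cons, List.sum_nil, add_zero]
            congr 1
            · rw [admL_cons]
              cases hc : Cut.isEmpty c <;> cases hcs : Cut.admissibleList cs <;> simp [hc, hcs]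
            · rw [admL_cons, lterm_false]
              cases ha : Cut.admissible c <;> cases hcs : Cut.admissibleList cs <;>
                simp [ha, hcs]
          rw [list_sum_congr perCS, list_sum_map_add]
          congr 1
          · cases hc : Cut.isEmpty c <;> simp [hc, list_sum_zero]
          · rw [List.sum_map_mul_left, LHF, list_sum_filter]
        rw [list_sum_congr inner, list_sum_map_add]
        congr 1
        · rw [sum_if_isEmpty t (fun c =>
            ((PTree.cutsOfList ts).map (fun cs =>
              if Cut.admissibleList cs then lterm k (t :: ts) ((true, c) :: cs)
              else 0)).sum)]
          have h2 : ∀ cs : List (Bool × Cut),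
              (if Cut.admissibleList cs then lterm k (t :: ts) ((true, eC t) :: cs) else 0)
              = iota k (fS k t) * (if Cut.admissibleList cs then lterm k ts cs else 0) := by
            intro cs
            cases hcs : Cut.admissibleList cs <;> simp [hcs, lterm_true_eC]
          rw [list_sum_congr h2, List.sum_map_mul_left, LHF, list_sum_filter]
        · rw [List.sum_map_mul_right, LHT, list_sum_filter]
      have hR : RHF k (t :: ts) = (iota k (fS k t) + RHT k t) * RHF k ts := by
        rw [RHF, PTree.cutsOfList, list_sum_flatMap]
        have inner : ∀ c : Cut,
            (((PTree.cutsOfList ts).flatMap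
                (fun cs => [(true, c) :: cs, (false, c) :: cs])).map
              (rterm k (t :: ts))).sum
            = (ttN k t c + ttR k t c) * RHF k ts := by
          intro c
          rw [list_sum_flatMap]
          have perCS : ∀ cs : List (Bool × Cut),
              (([(true, c) :: cs, (false, c) :: cs]).map (rterm k (t :: ts))).sum
              = (ttN k t c + ttR k t c) * rterm k ts cs := by
            intro cs
            rw [List.map_cons, List.map_cons, List.map_nil, List.sum_cons,
              List.sum_cons, List.sum_nil, add_zero, rterm_true, rterm_false, add_mul]
          rw [list_sum_congr perCS, List.sum_map_mul_left, RHF]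
        rw [list_sum_congr inner, List.sum_map_mul_right]
        congr 1
        rw [list_sum_map_add, ← iota_fS, RHT]
      rw [hL, hR, hTG, hFG, add_mul]
  termination_by l => sizeOf l
end

end FSAux
namespace FSAux

open MonoidAlgebra MulOpposite

variable {k : Type*} [CommRing k]

/-- Multiplying the two tensor factors back together. -/
def pi : (FreeMonoid PTree)ᵐᵒᵖ × FreeMonoid PTree → FreeMonoid PTree :=
  fun x => unop x.1 * x.2

theorem mapDomain_pi_term (f : HF k) (r : FreeMonoid PTree) :
    MonoidAlgebra.mapDomain pi
        (iota k f * MonoidAlgebra.single ((1 : (FreeMonoid PTree)ᵐᵒᵖ), r) (1 : k))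
      = f * MonoidAlgebra.single r (1 : k) := by
  induction f using MonoidAlgebra.induction with
  | zero => simp [iota_zero]
  | single_add p b f _ _ ih =>
      rw [iota_add, add_mul, MonoidAlgebra.mapDomain_add, ih, add_mul]
      congr 1
      rw [iota_single, MonoidAlgebra.single_mul_single,
        MonoidAlgebra.single_mul_single, MonoidAlgebra.mapDomain_single]
      simp [pi]

theorem pi_LHT (T : PTree) :
    MonoidAlgebra.mapDomain pi (LHT k T)
      = (((PTree.cutsOf T).filter Cut.admissible).map
          (fun c => fSForest k (PTree.Pcut T c)
            * MonoidAlgebra.single (FreeMonoid.of (PTree.Rcut T c)) (1 : k))).sum := by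
  rw [LHT, mapDomain_listsum]
  refine list_sum_congr (fun c => ?_)
  rw [tterm, mapDomain_pi_term]

theorem pi_RHT (T : PTree) :
    MonoidAlgebra.mapDomain pi (RHT k T) = -(fS k T) := by
  rw [RHT, mapDomain_listsum, fS, neg_neg]
  refine list_sum_congr (fun c => ?_)
  rw [ttR, MonoidAlgebra.mapDomain_single, MonoidAlgebra.smul_single', mul_one]
  rfl

theorem main_split (T : PTree) :
    (((PTree.cutsOf T).filter Cut.admissible).map
        (fun c => fSForest k (PTree.Pcut T c)
          * MonoidAlgebra.single (FreeMonoid.of (PTree.Rcut T c)) (1 : k))).sum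
      = MonoidAlgebra.single (FreeMonoid.of T) (1 : k)
        + (((PTree.cutsOf T).filter
              (fun c => Cut.admissible c && !(Cut.isEmpty c))).map
            (fun c => fSForest k (PTree.Pcut T c)
              * MonoidAlgebra.single (FreeMonoid.of (PTree.Rcut T c)) (1 : k))).sum := by
  set G : Cut → HF k := fun c => fSForest k (PTree.Pcut T c)
    * MonoidAlgebra.single (FreeMonoid.of (PTree.Rcut T c)) (1 : k) with hG
  have split : ∀ c : Cut, (if Cut.admissible c then G c else 0)
      = (if Cut.isEmpty c then G c else 0)
        + (if Cut.admissible c && !(Cut.isEmpty c) then G c else 0) := by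
    intro c
    cases hc : Cut.isEmpty c
    · simp [hc]
    · have ha := adm_of_isEmpty c hc
      simp [hc, ha]
  rw [list_sum_filter, list_sum_congr split, list_sum_map_add, sum_if_isEmpty T G,
    ← list_sum_filter]
  congr 1
  rw [hG]
  show fSForest k (PTree.Pcut T (eC T))
      * MonoidAlgebra.single (FreeMonoid.of (PTree.Rcut T (eC T))) (1 : k) = _
  rw [PTree.Pcut, PTree.Rcut, cutPieces_eC, fSForest_nil, one_mul]

end FSAux

/-- The explicit cut formula
`S(T) = −Σ_{all cuts c} (−1)^{|c|} overline{P^c(T)}·R^c(T)` (with reversed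
ordered forests) satisfies the antipode identity in the Foissy Hopf algebra:
for every planar rooted tree `T`,
`S(T) + T + Σ_{nonempty admissible cuts c} S(P^c(T))·R^c(T) = 0`,
i.e. `μ∘(S ⊗ id)∘Δ(T) = 0`. -/
theorem fS_antipode_identity (k : Type*) [Field k] [CharZero k] (T : PTree) :
    fS k T + MonoidAlgebra.single (FreeMonoid.of T) (1 : k)
      + (((PTree.cutsOf T).filter
            (fun c => Cut.admissible c && !(Cut.isEmpty c))).map
          (fun c => fSForest k (PTree.Pcut T c)
            * MonoidAlgebra.single (FreeMonoid.of (PTree.Rcut T c)) (1 : k))).sum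
      = 0 := by
  have key : (((PTree.cutsOf T).filter Cut.admissible).map
      (fun c => fSForest k (PTree.Pcut T c)
        * MonoidAlgebra.single (FreeMonoid.of (PTree.Rcut T c)) (1 : k))).sum
      = -(fS k T) := by
    rw [← FSAux.pi_LHT, FSAux.TG T, FSAux.pi_RHT]
  rw [FSAux.main_split T] at key
  have h2 : (((PTree.cutsOf T).filter
        (fun c => Cut.admissible c && !(Cut.isEmpty c))).map
      (fun c => fSForest k (PTree.Pcut T c)
        * MonoidAlgebra.single (FreeMonoid.of (PTree.Rcut T c)) (1 : k))).sum
      = -(fS k T) - MonoidAlgebra.single (FreeMonoid.of T) (1 : k) := by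
    rw [← key]; abel
  rw [h2]; abel
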